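/- Let X have at least two elements and φ : Γ → Γ be a map such that every orbit of φ is finite but φ is not quasi-periodic (equivalently, the orbit cardinalities of φ are unbounded). Then the infinite orbit number of the generalized shift σ_φ : X^Γ → X^Γ is infinite. -/

import Mathlib

open Function Set

section Aux

variable {X Γ : Type*} (φ : Γ → Γ)

private lemma genShift_iter (x : Γ → X) (n : ℕ) :
    (fun y : Γ → X => y ∘ φ)^[n] x = x ∘ φ^[n] := by
  induction n generalizing x with
  | zero => rfl
  | succ n ih =>
    rw [Function.iterate_succ_apply, ih (x ∘ φ), Function.iterate_succ']
    rfl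

private lemma ite_eq_ite_iff {a b : X} (hab : a ≠ b) (P Q : Prop) [Decidable P] [Decidable Q]
    (h : (if P then b else a) = (if Q then b else a)) : P ↔ Q := by
  by_cases hP : P <;> by_cases hQ : Q <;> simp_all

/-- preperiod of a point -/
noncomputable def ppd (α : Γ) : ℕ := sInf {t | φ^[t] α ∈ periodicPts φ}

/-- canonical representative of the forward orbit -/
noncomputable def repc (α : Γ) : Γ :=
  (⟨α, 0, rfl⟩ : ∃ β, β ∈ Set.range fun t : ℕ => φ^[t] α).choose

/-- phase along a cycle -/
noncomputable def phasec (α : Γ) : ℕ := sInf {t | φ^[t] (repc φ α) = α}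

private lemma choose_eq_choose {α : Type*} {p q : α → Prop} (h : p = q)
    (hp : ∃ x, p x) (hq : ∃ x, q x) : hp.choose = hq.choose := by subst h; rfl

private lemma range_iterate_eq (α : Γ) (hα : α ∈ periodicPts φ) (s : ℕ) :
    (Set.range fun t : ℕ => φ^[t] (φ^[s] α)) = Set.range fun t : ℕ => φ^[t] α := by
  obtain ⟨c, hc, hper⟩ := hα
  ext β
  constructor
  · rintro ⟨t, rfl⟩
    exact ⟨t + s, (Function.iterate_add_apply φ t s α)⟩
  · rintro ⟨t, rfl⟩
    refine ⟨t + (s * c - s), ?_⟩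
    have h1 : φ^[s * c] α = α := hper.const_mul s
    have h2 : t + (s * c - s) + s = t + s * c := by
      have : s ≤ s * c := Nat.le_mul_of_pos_right s hc
      omega
    calc φ^[t + (s * c - s)] (φ^[s] α)
        = φ^[t + (s * c - s) + s] α := (Function.iterate_add_apply φ _ s α).symm
      _ = φ^[t + s * c] α := by rw [h2]
      _ = φ^[t] (φ^[s * c] α) := Function.iterate_add_apply φ t (s * c) α
      _ = φ^[t] α := by rw [h1]

private lemma repc_iterate (α : Γ) (hα : α ∈ periodicPts φ) (s : ℕ) :
    repc φ (φ^[s] α) = repc φ α := by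
  unfold repc
  apply choose_eq_choose
  funext β
  rw [range_iterate_eq φ α hα s]

private lemma repc_spec (α : Γ) : ∃ t : ℕ, φ^[t] α = repc φ α :=
  (⟨α, 0, rfl⟩ : ∃ β, β ∈ Set.range fun t : ℕ => φ^[t] α).choose_spec

private lemma repc_fixed (α : Γ) (hα : α ∈ periodicPts φ) : repc φ (repc φ α) = repc φ α := by
  obtain ⟨t, ht⟩ := repc_spec φ α
  rw [← ht, repc_iterate φ α hα t]
  exact ht.symm

end Aux

section CaseA

variable {X Γ : Type*} (φ : Γ → Γ)

private lemma phasec_iterate (θ : Γ) (hθ : θ ∈ periodicPts φ) (hrep : repc φ θ = θ) (s : ℕ) :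
    phasec φ (φ^[s] θ) = s % minimalPeriod φ θ := by
  have hp : 0 < minimalPeriod φ θ := minimalPeriod_pos_of_mem_periodicPts hθ
  have hrs : repc φ (φ^[s] θ) = θ := by rw [repc_iterate φ θ hθ s, hrep]
  unfold phasec
  rw [hrs]
  have hmem : s % minimalPeriod φ θ ∈ {t | φ^[t] θ = φ^[s] θ} :=
    iterate_mod_minimalPeriod_eq
  have hne : ({t | φ^[t] θ = φ^[s] θ} : Set ℕ).Nonempty := ⟨_, hmem⟩
  have h1 : sInf {t | φ^[t] θ = φ^[s] θ} ≤ s % minimalPeriod φ θ := Nat.sInf_le hmem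
  have h2 := Nat.sInf_mem hne
  have hlt : sInf {t | φ^[t] θ = φ^[s] θ} < minimalPeriod φ θ :=
    lt_of_le_of_lt h1 (Nat.mod_lt _ hp)
  have : φ^[sInf {t | φ^[t] θ = φ^[s] θ}] θ = φ^[s % minimalPeriod φ θ] θ := by
    rw [h2, hmem]
  exact iterate_injOn_Iio_minimalPeriod hlt (Nat.mod_lt _ hp) this

private lemma caseA {k : ℕ} (a b : X) (hab : a ≠ b)
    (hA : ∀ P : ℕ, ∃ α ∈ periodicPts φ, P < minimalPeriod φ α) :
    ∃ F : Fin k → (Γ → X), ∀ (i j : Fin k) (n m : ℕ),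
      F i ∘ φ^[n + 1] = F j ∘ φ^[m + 1] → i = j ∧ n = m := by
  classical
  refine ⟨fun i α => if α ∈ periodicPts φ ∧ phasec φ α ≤ (i : ℕ) then b else a, ?_⟩
  intro i j n m h
  -- pick a big cycle
  obtain ⟨α₀, hα₀, hbig⟩ := hA (n + m + k + 2)
  obtain ⟨s₀, hs₀⟩ := repc_spec φ α₀
  set θ := repc φ α₀ with hθdef
  have hθper : θ ∈ periodicPts φ := by
    rw [← hs₀]
    obtain ⟨c, hc, hper⟩ := hα₀
    exact mk_mem_periodicPts hc (hper.apply_iterate s₀)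
  have hθrep : repc φ θ = θ := repc_fixed φ α₀ hα₀
  have hθmp : minimalPeriod φ θ = minimalPeriod φ α₀ := by
    rw [← hs₀]; exact minimalPeriod_apply_iterate hα₀ s₀
  set p := minimalPeriod φ θ with hpdef
  have hpbig : n + m + k + 2 < p := by rw [hθmp]; exact hbig
  have hik : (i : ℕ) < k := i.isLt
  have hjk : (j : ℕ) < k := j.isLt
  have eval : ∀ (c : ℕ) (l : Fin k),
      (if φ^[c] θ ∈ periodicPts φ ∧ phasec φ (φ^[c] θ) ≤ (l : ℕ) then b else a)
      = if c % p ≤ (l : ℕ) then b else a := by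
    intro c l
    have hmem : φ^[c] θ ∈ periodicPts φ := by
      obtain ⟨d, hd, hper⟩ := hθper
      exact mk_mem_periodicPts hd (hper.apply_iterate c)
    rw [phasec_iterate φ θ hθper hθrep c]
    simp only [hmem, true_and]
    rfl
  have key : ∀ c : ℕ, ((n + 1 + c) % p ≤ (i : ℕ)) ↔ ((m + 1 + c) % p ≤ (j : ℕ)) := by
    intro c
    have hfc := congrFun h (φ^[c] θ)
    simp only [Function.comp_apply] at hfc
    have e1 : φ^[n + 1] (φ^[c] θ) = φ^[n + 1 + c] θ :=
      (Function.iterate_add_apply φ (n + 1) c θ).symm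
    have e2 : φ^[m + 1] (φ^[c] θ) = φ^[m + 1 + c] θ :=
      (Function.iterate_add_apply φ (m + 1) c θ).symm
    rw [e1, e2, eval (n + 1 + c) i, eval (m + 1 + c) j] at hfc
    exact ite_eq_ite_iff hab _ _ hfc
  clear_value p
  -- first: n = m
  have hnm : n = m := by
    rcases Nat.lt_trichotomy n m with hlt | heq | hgt
    · exfalso
      have hc := (key (p - (m + 1))).mpr
      have e1 : m + 1 + (p - (m + 1)) = p := by omega
      have e2 : n + 1 + (p - (m + 1)) = p - (m - n) := by omega
      rw [e1, e2, Nat.mod_self] at hc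
      have h0 : (0 : ℕ) ≤ (j : ℕ) := Nat.zero_le _
      have := hc h0
      rw [Nat.mod_eq_of_lt (by omega)] at this
      omega
    · exact heq
    · exfalso
      have hc := (key (p - (n + 1))).mp
      have e1 : n + 1 + (p - (n + 1)) = p := by omega
      have e2 : m + 1 + (p - (n + 1)) = p - (n - m) := by omega
      rw [e1, e2, Nat.mod_self] at hc
      have := hc (Nat.zero_le _)
      rw [Nat.mod_eq_of_lt (by omega)] at this
      omega
  subst hnm
  refine ⟨?_, rfl⟩
  have hij : (i : ℕ) = (j : ℕ) := by
    have h1 := key (p - (n + 1) + ((i : ℕ) + 1))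
    have h2 := key (p - (n + 1) + ((j : ℕ) + 1))
    have e1 : n + 1 + (p - (n + 1) + ((i : ℕ) + 1)) = p + ((i : ℕ) + 1) := by omega
    have e2 : n + 1 + (p - (n + 1) + ((j : ℕ) + 1)) = p + ((j : ℕ) + 1) := by omega
    rw [e1, Nat.add_mod_left, Nat.mod_eq_of_lt (show (i : ℕ) + 1 < p by omega)] at h1
    rw [e2, Nat.add_mod_left, Nat.mod_eq_of_lt (show (j : ℕ) + 1 < p by omega)] at h2
    omega
  exact Fin.ext hij

end CaseA

section CaseB

variable {X Γ : Type*} (φ : Γ → Γ)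

private lemma iterate_mem_periodicPts {α : Γ} (hα : α ∈ periodicPts φ) (s : ℕ) :
    φ^[s] α ∈ periodicPts φ := by
  obtain ⟨c, hc, hper⟩ := hα
  exact mk_mem_periodicPts hc (hper.apply_iterate s)

private lemma ppd_iterate (hev : ∀ α : Γ, ∃ t : ℕ, φ^[t] α ∈ periodicPts φ) (α : Γ) (s : ℕ) :
    ppd φ (φ^[s] α) = ppd φ α - s := by
  have hne : ({t | φ^[t] α ∈ periodicPts φ} : Set ℕ).Nonempty := hev α
  have hPmem : φ^[ppd φ α] α ∈ periodicPts φ := Nat.sInf_mem hne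
  rcases le_or_gt s (ppd φ α) with hs | hs
  · -- s ≤ ppd α
    have hmem : (ppd φ α - s) ∈ {t | φ^[t] (φ^[s] α) ∈ periodicPts φ} := by
      show φ^[ppd φ α - s] (φ^[s] α) ∈ periodicPts φ
      rw [← Function.iterate_add_apply]
      have : ppd φ α - s + s = ppd φ α := by omega
      rw [this]; exact hPmem
    have h1 : ppd φ (φ^[s] α) ≤ ppd φ α - s := Nat.sInf_le hmem
    have hne' : ({t | φ^[t] (φ^[s] α) ∈ periodicPts φ} : Set ℕ).Nonempty := ⟨_, hmem⟩
    have h2 := Nat.sInf_mem hne'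
    have h3 : ppd φ α ≤ ppd φ (φ^[s] α) + s := by
      by_contra hcon
      push_neg at hcon
      have : ppd φ (φ^[s] α) + s ∈ {t | φ^[t] α ∈ periodicPts φ} := by
        show φ^[ppd φ (φ^[s] α) + s] α ∈ periodicPts φ
        rw [Function.iterate_add_apply]
        exact h2
      have h4 : ppd φ α ≤ ppd φ (φ^[s] α) + s := Nat.sInf_le this
      omega
    omega
  · -- s > ppd α : φ^[s] α is periodic
    have hper : φ^[s] α ∈ periodicPts φ := by
      have : φ^[s] α = φ^[s - ppd φ α] (φ^[ppd φ α] α) := by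
        rw [← Function.iterate_add_apply]
        congr 1
        omega
      rw [this]
      exact iterate_mem_periodicPts φ hPmem _
    have : ppd φ (φ^[s] α) = 0 :=
      Nat.le_antisymm (Nat.sInf_le (by simpa using hper)) (Nat.zero_le _)
    omega

private lemma ppd_surj (hev : ∀ α : Γ, ∃ t : ℕ, φ^[t] α ∈ periodicPts φ)
    (hB : ∀ T : ℕ, ∃ α : Γ, T < ppd φ α) (v : ℕ) : ∃ α : Γ, ppd φ α = v := by
  obtain ⟨α, hα⟩ := hB v
  refine ⟨φ^[ppd φ α - v] α, ?_⟩
  rw [ppd_iterate φ hev]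
  omega

private lemma strictMono_eq_of_range_eq {f g : ℕ → ℕ} (hf : StrictMono f) (hg : StrictMono g)
    (h : ∀ s : ℕ, (∃ t, s = f t) ↔ (∃ t, s = g t)) : ∀ t, f t = g t := by
  intro t
  induction t using Nat.strong_induction_on with
  | _ t ih =>
    obtain ⟨u, hu⟩ := (h (f t)).mp ⟨t, rfl⟩
    obtain ⟨r, hr⟩ := (h (g t)).mpr ⟨t, rfl⟩
    have h1 : f t ≥ g t := by
      rcases lt_or_ge u t with hut | hut
      · exfalso
        have := ih u hut
        rw [← this] at hu
        exact absurd (hf.injective hu.symm) (by omega)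
      · calc f t = g u := hu
          _ ≥ g t := hg.monotone hut
    have h2 : g t ≥ f t := by
      rcases lt_or_ge r t with hrt | hrt
      · exfalso
        have := ih r hrt
        rw [this] at hr
        exact absurd (hg.injective hr.symm) (by omega)
      · calc g t = f r := hr
          _ ≥ f t := hf.monotone hrt
    omega

private lemma caseB {k : ℕ} (a b : X) (hab : a ≠ b)
    (hev : ∀ α : Γ, ∃ t : ℕ, φ^[t] α ∈ periodicPts φ)
    (hB : ∀ T : ℕ, ∃ α : Γ, T < ppd φ α) :
    ∃ F : Fin k → (Γ → X), ∀ (i j : Fin k) (n m : ℕ),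
      F i ∘ φ^[n + 1] = F j ∘ φ^[m + 1] → i = j ∧ n = m := by
  classical
  refine ⟨fun i α => if ∃ t : ℕ, ppd φ α = 1 + t * ((i : ℕ) + 1) then b else a, ?_⟩
  intro i j n m h
  have key : ∀ v : ℕ, (∃ t : ℕ, v - (n + 1) = 1 + t * ((i : ℕ) + 1)) ↔
      (∃ t : ℕ, v - (m + 1) = 1 + t * ((j : ℕ) + 1)) := by
    intro v
    obtain ⟨α, hα⟩ := ppd_surj φ hev hB v
    have := congrFun h α
    simp only [Function.comp_apply] at this
    rw [show ppd φ (φ^[n + 1] α) = v - (n + 1) from by rw [ppd_iterate φ hev, hα],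
        show ppd φ (φ^[m + 1] α) = v - (m + 1) from by rw [ppd_iterate φ hev, hα]] at this
        -- note: need ite applied *before* rewriting; fix below if broken
    exact ite_eq_ite_iff hab _ _ this
  have key2 : ∀ s : ℕ, (∃ t, s = (1 + t * ((i : ℕ) + 1)) + (n + 1)) ↔
      (∃ t, s = (1 + t * ((j : ℕ) + 1)) + (m + 1)) := by
    intro s
    constructor
    · rintro ⟨t, rfl⟩
      have h1 : (1 + t * ((i : ℕ) + 1)) + (n + 1) - (n + 1) = 1 + t * ((i : ℕ) + 1) := by omega
      obtain ⟨u, hu⟩ := (key _).mp ⟨t, h1⟩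
      refine ⟨u, ?_⟩
      set A := t * ((i : ℕ) + 1) with hA
      set B := u * ((j : ℕ) + 1) with hB2
      omega
    · rintro ⟨t, rfl⟩
      have h1 : (1 + t * ((j : ℕ) + 1)) + (m + 1) - (m + 1) = 1 + t * ((j : ℕ) + 1) := by omega
      obtain ⟨u, hu⟩ := (key _).mpr ⟨t, h1⟩
      refine ⟨u, ?_⟩
      set A := t * ((j : ℕ) + 1) with hA
      set B := u * ((i : ℕ) + 1) with hB2
      omega
  have hmf : StrictMono (fun t : ℕ => (1 + t * ((i : ℕ) + 1)) + (n + 1)) := by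
    intro x y hxy
    show (1 + x * ((i : ℕ) + 1)) + (n + 1) < (1 + y * ((i : ℕ) + 1)) + (n + 1)
    have : x * ((i : ℕ) + 1) < y * ((i : ℕ) + 1) :=
      mul_lt_mul_of_pos_right hxy (Nat.succ_pos _)
    omega
  have hmg : StrictMono (fun t : ℕ => (1 + t * ((j : ℕ) + 1)) + (m + 1)) := by
    intro x y hxy
    show (1 + x * ((j : ℕ) + 1)) + (m + 1) < (1 + y * ((j : ℕ) + 1)) + (m + 1)
    have : x * ((j : ℕ) + 1) < y * ((j : ℕ) + 1) :=
      mul_lt_mul_of_pos_right hxy (Nat.succ_pos _)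
    omega
  have heq := strictMono_eq_of_range_eq hmf hmg key2
  have h0 := heq 0
  have h1 := heq 1
  simp only [Nat.zero_mul, Nat.one_mul] at h0 h1
  have hnm : n = m := by omega
  have hij : (i : ℕ) = (j : ℕ) := by omega
  exact ⟨Fin.ext hij, hnm⟩

end CaseB

/-- If every orbit of `φ` is finite but `φ` is not quasi-periodic, then the infinite orbit
number of the generalized shift `σ_φ` is infinite. -/
theorem genShift_orbitNumber_infinite_of_unbounded {X Γ : Type*} [Nontrivial X] (φ : Γ → Γ)
    (hfin : ∀ θ : Γ, (Set.range fun n : ℕ => φ^[n] θ).Finite)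
    (hnqp : ¬ ∃ n m : ℕ, 1 ≤ m ∧ m < n ∧ φ^[n] = φ^[m]) :
    ∀ k : ℕ, 1 ≤ k → ∃ x : Fin k → (Γ → X),
      (∀ i, Function.Injective fun n : ℕ => (fun y : Γ → X => y ∘ φ)^[n + 1] (x i)) ∧
      ∀ i j, i ≠ j →
        Disjoint (Set.range fun n : ℕ => (fun y : Γ → X => y ∘ φ)^[n + 1] (x i))
          (Set.range fun n : ℕ => (fun y : Γ → X => y ∘ φ)^[n + 1] (x j)) := by
  classical
  intro k _
  obtain ⟨a, b, hab⟩ := exists_pair_ne X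
  -- every point is eventually periodic
  have hev : ∀ α : Γ, ∃ t : ℕ, φ^[t] α ∈ periodicPts φ := by
    intro α
    have hfin' := hfin α
    have hninj : ¬ Function.Injective fun n : ℕ => φ^[n] α := by
      intro hinj
      exact (Set.infinite_range_of_injective hinj) hfin'
    simp only [Function.Injective, not_forall] at hninj
    obtain ⟨p, q, hpq, hne⟩ := hninj
    rcases lt_or_gt_of_ne hne with hlt | hlt
    · refine ⟨p, mk_mem_periodicPts (n := q - p) (by omega) ?_⟩
      show φ^[q - p] (φ^[p] α) = φ^[p] α
      rw [← Function.iterate_add_apply]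
      rw [show q - p + p = q from by omega]
      exact hpq.symm
    · refine ⟨q, mk_mem_periodicPts (n := p - q) (by omega) ?_⟩
      show φ^[p - q] (φ^[q] α) = φ^[q] α
      rw [← Function.iterate_add_apply]
      rw [show p - q + q = p from by omega]
      exact hpq
  -- dichotomy
  have hdich : (∀ P : ℕ, ∃ α ∈ periodicPts φ, P < minimalPeriod φ α) ∨
      (∀ T : ℕ, ∃ α : Γ, T < ppd φ α) := by
    by_contra hcon
    push_neg at hcon
    obtain ⟨⟨P, hP⟩, ⟨T, hT⟩⟩ := hcon
    apply hnqp
    refine ⟨T + 1 + P.factorial, T + 1, by omega, by have := P.factorial_pos; omega, ?_⟩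
    funext α
    have hper : φ^[T + 1] α ∈ periodicPts φ := by
      have h1 : ppd φ (φ^[T + 1] α) = 0 := by
        rw [ppd_iterate φ hev]
        have := hT α
        omega
      have hne : ({t | φ^[t] (φ^[T + 1] α) ∈ periodicPts φ} : Set ℕ).Nonempty := hev _
      have := Nat.sInf_mem hne
      rw [show sInf {t | φ^[t] (φ^[T + 1] α) ∈ periodicPts φ} = ppd φ (φ^[T + 1] α) from rfl,
        h1] at this
      simpa using this
    have hdvd : minimalPeriod φ (φ^[T + 1] α) ∣ P.factorial :=
      Nat.dvd_factorial (minimalPeriod_pos_of_mem_periodicPts hper) (hP _ hper)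
    have hfix : φ^[P.factorial] (φ^[T + 1] α) = φ^[T + 1] α :=
      (isPeriodicPt_iff_minimalPeriod_dvd.mpr hdvd).eq
    calc φ^[T + 1 + P.factorial] α = φ^[P.factorial + (T + 1)] α := by rw [Nat.add_comm]
      _ = φ^[P.factorial] (φ^[T + 1] α) := Function.iterate_add_apply φ _ _ α
      _ = φ^[T + 1] α := hfix
  -- get the family F
  have hF : ∃ F : Fin k → (Γ → X), ∀ (i j : Fin k) (n m : ℕ),
      F i ∘ φ^[n + 1] = F j ∘ φ^[m + 1] → i = j ∧ n = m := by
    rcases hdich with hA | hB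
    · exact caseA φ a b hab hA
    · exact caseB φ a b hab hev hB
  obtain ⟨F, H⟩ := hF
  refine ⟨F, ?_, ?_⟩
  · intro i p q hpq
    simp only [genShift_iter] at hpq
    exact (H i i p q hpq).2
  · intro i j hij
    rw [Set.disjoint_left]
    rintro y ⟨p, rfl⟩ ⟨q, hq⟩
    simp only [genShift_iter] at hq
    exact hij (H i j p q hq.symm).1
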